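/- Assume the pair (c, κ) is admissible and λ ∈ (0, π²/(4c²κ)). Then A(a) < 0 for every a ∈ [0, 1−c]. -/
import Mathlib


/-- The threshold `c*` for `κ > 1`. -/
noncomputable def cStar (κ : ℝ) : ℝ :=
  1 / (1 + (2 * Real.sqrt κ / Real.pi) * Real.log ((Real.sqrt κ + 1) / (Real.sqrt κ - 1)))

/-- Admissibility of the pair `(c, κ)`. -/
def Admissible (c κ : ℝ) : Prop :=
  (0 < κ ∧ κ ≤ 1 ∧ 0 < c ∧ c < 1) ∨ (1 < κ ∧ cStar κ < c ∧ c < 1)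

/-- The coefficient `A(a)` of `β₀` in `∂_{β₁} f`. -/
noncomputable def A (c κ lam a : ℝ) : ℝ :=
  -2 * Real.sqrt κ * Real.cos (c * Real.sqrt (κ * lam)) * Real.sinh (Real.sqrt lam * (1 - c))
  + (κ - 1) * Real.sin (c * Real.sqrt (κ * lam)) * Real.cosh (Real.sqrt lam * (1 - c))
  - (κ + 1) * Real.sin (c * Real.sqrt (κ * lam)) * Real.cosh (Real.sqrt lam * (2 * a + c - 1))

theorem stmt8 (c κ lam : ℝ) (hadm : Admissible c κ)
    (hlam : lam ∈ Set.Ioo 0 (Real.pi ^ 2 / (4 * c ^ 2 * κ))) :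
    ∀ a ∈ Set.Icc (0:ℝ) (1 - c), A c κ lam a < 0 := by
  obtain ⟨hlam0, hlamU⟩ := hlam
  intro a ha
  obtain ⟨ha0, ha1⟩ := ha
  have hπ : (0:ℝ) < Real.pi := Real.pi_pos
  -- basic positivity facts
  have hκ0 : 0 < κ := by
    rcases hadm with ⟨h, _⟩ | ⟨h, _⟩ <;> linarith
  have hsκ : 0 < Real.sqrt κ := Real.sqrt_pos.mpr hκ0
  have hc1 : c < 1 := by
    rcases hadm with ⟨_, _, _, h⟩ | ⟨_, _, h⟩ <;> linarith
  have hc0 : 0 < c := by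
    rcases hadm with ⟨_, _, h, _⟩ | ⟨hκ1, hcs, _⟩
    · exact h
    · -- c > cStar κ > 0
      have hsκ1 : 1 < Real.sqrt κ := by
        have h := Real.sqrt_lt_sqrt (by norm_num : (0:ℝ) ≤ 1) hκ1
        simpa using h
      have hlogpos : 0 < Real.log ((Real.sqrt κ + 1) / (Real.sqrt κ - 1)) := by
        apply Real.log_pos
        rw [lt_div_iff₀ (by linarith)]
        linarith
      have hden : 0 < 1 + 2 * Real.sqrt κ / Real.pi *
          Real.log ((Real.sqrt κ + 1) / (Real.sqrt κ - 1)) := by positivity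
      have : 0 < cStar κ := by
        unfold cStar; positivity
      linarith
  -- θ := c * √(κ lam) ∈ (0, π/2)
  set θ := c * Real.sqrt (κ * lam) with hθ
  have hθpos : 0 < θ := by
    have : 0 < Real.sqrt (κ * lam) := Real.sqrt_pos.mpr (by positivity)
    positivity
  have hθlt : θ < Real.pi / 2 := by
    have h4 : (0:ℝ) < 4 * c ^ 2 * κ := by positivity
    have hl : lam * (4 * c ^ 2 * κ) < Real.pi ^ 2 := (lt_div_iff₀ h4).mp hlamU
    have hsq : θ ^ 2 < (Real.pi / 2) ^ 2 := by
      have : θ ^ 2 = c ^ 2 * (κ * lam) := by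
        rw [hθ, mul_pow, Real.sq_sqrt (by positivity : (0:ℝ) ≤ κ * lam)]
      rw [this]; nlinarith
    exact lt_of_pow_lt_pow_left₀ 2 (by positivity) hsq
  have hsin : 0 < Real.sin θ :=
    Real.sin_pos_of_pos_of_lt_pi hθpos (by linarith)
  have hcos : 0 < Real.cos θ :=
    Real.cos_pos_of_mem_Ioo ⟨by linarith, hθlt⟩
  have hsl : 0 < Real.sqrt lam := Real.sqrt_pos.mpr hlam0
  have hsinh : 0 < Real.sinh (Real.sqrt lam * (1 - c)) :=
    Real.sinh_pos_iff.mpr (mul_pos hsl (by linarith))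
  have hcoshY : 1 ≤ Real.cosh (Real.sqrt lam * (2 * a + c - 1)) := Real.one_le_cosh _
  have hcoshYpos : 0 < Real.cosh (Real.sqrt lam * (2 * a + c - 1)) := by linarith
  -- the key inequality on the cosh bracket
  have key : (κ - 1) * Real.cosh (Real.sqrt lam * (1 - c))
      < (κ + 1) * Real.cosh (Real.sqrt lam * (2 * a + c - 1)) := by
    rcases hadm with ⟨_, hκ1, _, _⟩ | ⟨hκ1, hcs, _⟩
    · -- κ ≤ 1 : LHS ≤ 0 < RHS
      have h1 : (κ - 1) * Real.cosh (Real.sqrt lam * (1 - c)) ≤ 0 :=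
        mul_nonpos_of_nonpos_of_nonneg (by linarith) (Real.cosh_pos _).le
      have h2 : 0 < (κ + 1) * Real.cosh (Real.sqrt lam * (2 * a + c - 1)) :=
        mul_pos (by linarith) hcoshYpos
      linarith
    · -- κ > 1 : use c > cStar κ
      have hsκ1 : 1 < Real.sqrt κ := by
        have h := Real.sqrt_lt_sqrt (by norm_num : (0:ℝ) ≤ 1) hκ1
        simpa using h
      set L := Real.log ((Real.sqrt κ + 1) / (Real.sqrt κ - 1)) with hL
      have hargpos : (0:ℝ) < (Real.sqrt κ + 1) / (Real.sqrt κ - 1) := by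
        apply div_pos <;> linarith
      have hLpos : 0 < L := by
        apply Real.log_pos
        rw [lt_div_iff₀ (by linarith)]
        linarith
      -- c > cStar ⟹ (1-c)*π/(2 c √κ) < L
      have hucL : Real.sqrt lam * (1 - c) < L := by
        have hden : 0 < 1 + 2 * Real.sqrt κ / Real.pi * L := by positivity
        have h1 : 1 / (1 + 2 * Real.sqrt κ / Real.pi * L) < c := hcs
        have h2 : 1 < c * (1 + 2 * Real.sqrt κ / Real.pi * L) := by
          rw [div_lt_iff₀ hden] at h1; linarith
        -- so (1-c) * π < 2 c √κ L
        have h3 : (1 - c) * Real.pi < 2 * c * Real.sqrt κ * L := by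
          have := mul_lt_mul_of_pos_right h2 hπ
          have hπne : Real.pi ≠ 0 := ne_of_gt hπ
          field_simp at this
          nlinarith
        -- and √lam < π / (2 c √κ)
        have hslU : Real.sqrt lam * (2 * c * Real.sqrt κ) < Real.pi := by
          have h4 : (0:ℝ) < 4 * c ^ 2 * κ := by positivity
          have hl : lam * (4 * c ^ 2 * κ) < Real.pi ^ 2 := (lt_div_iff₀ h4).mp hlamU
          have hsq : (Real.sqrt lam * (2 * c * Real.sqrt κ)) ^ 2 < Real.pi ^ 2 := by
            have e : (Real.sqrt lam * (2 * c * Real.sqrt κ)) ^ 2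
                = lam * (4 * c ^ 2 * κ) := by
              rw [mul_pow, mul_pow, mul_pow, Real.sq_sqrt hlam0.le,
                Real.sq_sqrt hκ0.le]
              ring
            rw [e]; exact hl
          exact lt_of_pow_lt_pow_left₀ 2 hπ.le hsq
        nlinarith [mul_pos hc0 hsκ, mul_pos (mul_pos hc0 hsκ) hLpos]
      -- cosh L = (κ+1)/(κ-1)
      have hexpL : Real.exp L = (Real.sqrt κ + 1) / (Real.sqrt κ - 1) :=
        Real.exp_log hargpos
      have hexpnL : Real.exp (-L) = (Real.sqrt κ - 1) / (Real.sqrt κ + 1) := by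
        rw [Real.exp_neg, hexpL, inv_div]
      have hcoshL : Real.cosh L = (κ + 1) / (κ - 1) := by
        rw [Real.cosh_eq, hexpL, hexpnL]
        have h1 : Real.sqrt κ - 1 ≠ 0 := by linarith
        have h2 : Real.sqrt κ + 1 ≠ 0 := by linarith
        have h3 : κ - 1 ≠ 0 := by linarith
        have hk : Real.sqrt κ ^ 2 = κ := Real.sq_sqrt hκ0.le
        field_simp
        linear_combination (-4 : ℝ) * hk
      have hmono : Real.cosh (Real.sqrt lam * (1 - c)) < Real.cosh L := by
        rw [Real.cosh_lt_cosh]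
        rw [abs_of_nonneg (mul_nonneg hsl.le (by linarith) : (0:ℝ) ≤ Real.sqrt lam * (1 - c)),
          abs_of_pos hLpos]
        exact hucL
      have hbound : (κ - 1) * Real.cosh (Real.sqrt lam * (1 - c)) < κ + 1 := by
        have := mul_lt_mul_of_pos_left hmono (by linarith : (0:ℝ) < κ - 1)
        rw [hcoshL, mul_div_cancel₀] at this
        · linarith
        · linarith
      have h5 : κ + 1 ≤ (κ + 1) * Real.cosh (Real.sqrt lam * (2 * a + c - 1)) :=
        le_mul_of_one_le_right (by linarith) hcoshY
      linarith
  -- conclude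
  unfold A
  rw [← hθ]
  have h1 : 0 < 2 * Real.sqrt κ * Real.cos θ * Real.sinh (Real.sqrt lam * (1 - c)) := by
    positivity
  have h2 : Real.sin θ * ((κ - 1) * Real.cosh (Real.sqrt lam * (1 - c)))
      < Real.sin θ * ((κ + 1) * Real.cosh (Real.sqrt lam * (2 * a + c - 1))) :=
    mul_lt_mul_of_pos_left key hsin
  linarith [h1, h2]
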